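/- Let C, C₁, C₂, … be Archimedean copulas with (normalized, right-continuous at 0) generators φ, φ₁, φ₂, … such that (φ_n) converges pointwise to φ on (0,1] and, in addition, lim_{n→∞} φ_n(0) = φ(0) (in [0,∞]). Then the 0-level functions converge pointwise: lim_{n→∞} f_n^0(x) = f^0(x) for all x ∈ [0,1]. -/
import Mathlib


open MeasureTheory Filter Set
open scoped ENNReal

noncomputable section

/-- Right-hand derivative (of a convex function on `[0,1]`) of `f` at `x`, realized as the
infimum of the forward difference quotients with right endpoint in `(x, 1]`. -/
noncomputable def rightD (f : ℝ → ℝ) (x : ℝ) : ℝ :=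
  sInf ((fun y => (f y - f x) / (y - x)) '' Set.Ioc x 1)

/-- `φ : [0,1] → [0,∞]` is a (normalized, right-continuous at `0`) generator of an
Archimedean copula: convex, strictly decreasing, `φ 1 = 0`, finite on `(0,1]`,
right-continuous at `0` and normalized by `φ (1/2) = 1`. -/
structure IsGenerator (φ : ℝ → ℝ≥0∞) : Prop where
  convex : ∀ x ∈ Set.Icc (0:ℝ) 1, ∀ y ∈ Set.Icc (0:ℝ) 1, ∀ t ∈ Set.Icc (0:ℝ) 1,
    φ (t * x + (1 - t) * y) ≤ ENNReal.ofReal t * φ x + ENNReal.ofReal (1 - t) * φ y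
  strict_anti : ∀ x ∈ Set.Icc (0:ℝ) 1, ∀ y ∈ Set.Icc (0:ℝ) 1, x < y → φ y < φ x
  map_one : φ 1 = 0
  finite : ∀ x ∈ Set.Ioc (0:ℝ) 1, φ x < ⊤
  rightCont_zero : Filter.Tendsto φ (nhdsWithin 0 (Set.Ioi 0)) (nhds (φ 0))
  normalized : φ (1/2) = 1

/-- Pseudo-inverse `φ⁻` of a generator: `φ⁻ s = φ⁻¹ s` for `s < φ 0` and `0` for `s ≥ φ 0`. -/
noncomputable def pseudoInv (φ : ℝ → ℝ≥0∞) (s : ℝ≥0∞) : ℝ :=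
  sSup {x | x ∈ Set.Icc (0:ℝ) 1 ∧ s ≤ φ x}

/-- The Archimedean copula generated by `φ`: `C(x,y) = φ⁻(φ x + φ y)`. -/
noncomputable def archCopula (φ : ℝ → ℝ≥0∞) (x y : ℝ) : ℝ :=
  pseudoInv φ (φ x + φ y)

/-- The right-hand derivative `D⁺φ` of a generator. -/
noncomputable def Dplus (φ : ℝ → ℝ≥0∞) (x : ℝ) : ℝ :=
  rightD (fun t => (φ t).toReal) x

/-- The set `Cont(D⁺φ)` of continuity points of `D⁺φ` in `(0,1)`. -/
def ContD (φ : ℝ → ℝ≥0∞) : Set ℝ :=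
  {x | x ∈ Set.Ioo (0:ℝ) 1 ∧ ContinuousAt (Dplus φ) x}

/-- The `t`-level function `f^t(x) = φ⁻(φ t − φ x)` of the Archimedean copula generated
by `φ`. -/
noncomputable def levelFn (φ : ℝ → ℝ≥0∞) (t x : ℝ) : ℝ :=
  pseudoInv φ (φ t - φ x)

/-- The Kendall distribution function `F^Kendall(x) = x − φ(x)/D⁺φ(x)` of the Archimedean
copula generated by `φ`. -/
noncomputable def kendall (φ : ℝ → ℝ≥0∞) (x : ℝ) : ℝ :=
  x - (φ x).toReal / Dplus φ x

/-- The Markov kernel (as conditional distribution function `(x,y) ↦ K_C(x,[0,y])`) of the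
Archimedean copula generated by `φ`. -/
noncomputable def archKernel (φ : ℝ → ℝ≥0∞) (x y : ℝ) : ℝ :=
  if x = 0 ∨ x = 1 then 1
  else if y < levelFn φ 0 x then 0
  else Dplus φ x / Dplus φ (archCopula φ x y)

/-- The metric `D₁` between two copulas, expressed via their conditional distribution
functions `K₁, K₂` (with `Kᵢ x y = K_{Cᵢ}(x,[0,y])`). -/
noncomputable def D1 (K1 K2 : ℝ → ℝ → ℝ) : ℝ :=
  ∫ y in Set.Icc (0:ℝ) 1, ∫ x in Set.Icc (0:ℝ) 1, |K1 x y - K2 x y|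

/-- Conditional distribution function of the independence copula `Π`. -/
def piKernel : ℝ → ℝ → ℝ := fun _ y => y

/-- Dependence measure `ζ₁(C) = 3 D₁(C, Π)`. -/
noncomputable def zeta1 (K : ℝ → ℝ → ℝ) : ℝ := 3 * D1 K piKernel

/-- Dependence measure `r(C) = 6 ∫∫ K_C(x,[0,y])² dλ(x) dλ(y) − 2`. -/
noncomputable def rdep (K : ℝ → ℝ → ℝ) : ℝ :=
  6 * (∫ y in Set.Icc (0:ℝ) 1, ∫ x in Set.Icc (0:ℝ) 1, (K x y) ^ 2) - 2

/-- Weak conditional convergence of a sequence of copulas, in terms of their conditional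
distribution functions: for λ-a.e. `x ∈ [0,1]` the measures `K_{C_n}(x,·)` converge weakly
to `K_C(x,·)`, i.e. the conditional distribution functions converge at every continuity
point of `y ↦ K_C(x,[0,y])` in `[0,1]`. -/
def WeakCondConv (Kseq : ℕ → ℝ → ℝ → ℝ) (K : ℝ → ℝ → ℝ) : Prop :=
  ∀ᵐ x ∂(volume.restrict (Set.Icc (0:ℝ) 1)),
    ∀ y ∈ Set.Icc (0:ℝ) 1, ContinuousWithinAt (fun t => K x t) (Set.Icc 0 1) y →
      Filter.Tendsto (fun n => Kseq n x y) Filter.atTop (nhds (K x y))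


lemma pseudoInv_le_one (φ : ℝ → ℝ≥0∞) (s : ℝ≥0∞) : pseudoInv φ s ≤ 1 :=
  Real.sSup_le (fun _ hx => hx.1.2) zero_le_one

lemma pseudoInv_nonneg (φ : ℝ → ℝ≥0∞) (s : ℝ≥0∞) : 0 ≤ pseudoInv φ s :=
  Real.sSup_nonneg (fun _ hx => hx.1.1)

lemma pseudoInv_bdd (φ : ℝ → ℝ≥0∞) (s : ℝ≥0∞) :
    BddAbove {x | x ∈ Set.Icc (0:ℝ) 1 ∧ s ≤ φ x} :=
  (bddAbove_Icc (a := (0:ℝ)) (b := 1)).mono (fun _ hx => hx.1)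

/-- For Archimedean copulas whose generators converge pointwise on
`(0,1]` and additionally satisfy `φ_n(0) → φ(0)` (in `[0,∞]`), the `0`-level functions
converge pointwise on `[0,1]`. -/
theorem stmt7 (φ : ℝ → ℝ≥0∞) (φseq : ℕ → ℝ → ℝ≥0∞)
    (hφ : IsGenerator φ) (hφseq : ∀ n, IsGenerator (φseq n))
    (hconv : ∀ x ∈ Set.Ioc (0:ℝ) 1,
      Filter.Tendsto (fun n => φseq n x) Filter.atTop (nhds (φ x)))
    (hconv0 : Filter.Tendsto (fun n => φseq n 0) Filter.atTop (nhds (φ 0))) :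
    ∀ x ∈ Set.Icc (0:ℝ) 1,
      Filter.Tendsto (fun n => levelFn (φseq n) 0 x) Filter.atTop
        (nhds (levelFn φ 0 x)) := by
  intro x hx
  rcases hx.1.eq_or_lt with hx0 | hx0
  · -- x = 0 : both sides are constantly 1
    have key : ∀ ψ : ℝ → ℝ≥0∞, levelFn ψ 0 x = 1 := by
      intro ψ
      rw [← hx0]
      unfold levelFn pseudoInv
      rw [tsub_self]
      have hset : {z | z ∈ Set.Icc (0:ℝ) 1 ∧ (0:ℝ≥0∞) ≤ ψ z} = Set.Icc (0:ℝ) 1 := by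
        ext z; simp [zero_le]
      rw [hset, csSup_Icc zero_le_one]
    simp only [key]
    exact tendsto_const_nhds
  · have hxm : x ∈ Set.Ioc (0:ℝ) 1 := ⟨hx0, hx.2⟩
    have hsn : Filter.Tendsto (fun n => φseq n 0 - φseq n x) Filter.atTop
        (nhds (φ 0 - φ x)) :=
      ENNReal.Tendsto.sub hconv0 (hconv x hxm) (Or.inr (hφ.finite x hxm).ne)
    set s : ℝ≥0∞ := φ 0 - φ x with hs
    have hyS : levelFn φ 0 x = sSup {z | z ∈ Set.Icc (0:ℝ) 1 ∧ s ≤ φ z} := rfl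
    rw [tendsto_order]
    constructor
    · intro a ha
      rcases lt_or_ge a 0 with ha0 | ha0
      · exact Filter.Eventually.of_forall fun n =>
          lt_of_lt_of_le ha0 (pseudoInv_nonneg _ _)
      · obtain ⟨c, hac, hcy⟩ := exists_between ha
        have hc0 : 0 < c := lt_of_le_of_lt ha0 hac
        rw [hyS] at hcy
        have hSne : {z | z ∈ Set.Icc (0:ℝ) 1 ∧ s ≤ φ z}.Nonempty := by
          by_contra h
          rw [Set.not_nonempty_iff_eq_empty] at h
          rw [h, Real.sSup_empty] at hcy
          exact absurd hcy (not_lt.2 hc0.le)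
        obtain ⟨z, hz, hcz⟩ := exists_lt_of_lt_csSup hSne hcy
        have hzI : z ∈ Set.Icc (0:ℝ) 1 := hz.1
        have hcI : c ∈ Set.Icc (0:ℝ) 1 := ⟨hc0.le, hcz.le.trans hzI.2⟩
        have hsc : s < φ c := lt_of_le_of_lt hz.2 (hφ.strict_anti c hcI z hzI hcz)
        filter_upwards [Filter.Tendsto.eventually_lt hsn (hconv c ⟨hc0, hcI.2⟩) hsc]
          with n hn
        have hcm : c ≤ levelFn (φseq n) 0 x :=
          le_csSup (pseudoInv_bdd (φseq n) _) ⟨hcI, hn.le⟩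
        exact lt_of_lt_of_le hac hcm
    · intro b hb
      rcases le_or_gt b 1 with hb1 | hb1
      · obtain ⟨c, hyc, hcb⟩ := exists_between hb
        have hc0 : 0 < c := lt_of_le_of_lt (pseudoInv_nonneg φ _) hyc
        have hc1 : c ≤ 1 := hcb.le.trans hb1
        have hφc : φ c < s := by
          by_contra h
          push_neg at h
          have hmem : c ≤ levelFn φ 0 x :=
            le_csSup (pseudoInv_bdd φ _) ⟨⟨hc0.le, hc1⟩, h⟩
          exact absurd hmem (not_le.2 hyc)
        filter_upwards [Filter.Tendsto.eventually_lt (hconv c ⟨hc0, hc1⟩) hsn hφc]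
          with n hn
        refine lt_of_le_of_lt ?_ hcb
        refine Real.sSup_le ?_ hc0.le
        rintro z ⟨hzI, hzs⟩
        by_contra hzc
        push_neg at hzc
        have hlt : φseq n z < φseq n c :=
          (hφseq n).strict_anti c ⟨hc0.le, hc1⟩ z hzI hzc
        exact absurd hzs (not_le.2 (hlt.trans hn))
      · exact Filter.Eventually.of_forall fun n =>
          lt_of_le_of_lt (pseudoInv_le_one _ _) hb1
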